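/- Let λ ∈ ℝ with 0 < λ < 1. Then the set {x ∈ [-π, π] : sin x = λ·x} has exactly three elements: x = 0 and a pair of opposite nonzero solutions ±x₀ with x₀ ∈ (0, π). -/

import Mathlib

open Real Set

lemma sin_uniq (lam : ℝ) (h0 : 0 < lam) {a b : ℝ} (ha : 0 < a) (hab : a < b)
    (hb : b ≤ Real.pi) (hsa : Real.sin a = lam * a) (hsb : Real.sin b = lam * b) : False := by
  have hbpos : 0 < b := ha.trans hab
  have hcomb : (1 - a / b) • (0:ℝ) + (a / b) • b = a := by
    rw [smul_zero, zero_add, smul_eq_mul]; field_simp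
  have ht : (0:ℝ) < 1 - a / b := by
    have := (div_lt_one hbpos).2 hab; linarith
  have hu : (0:ℝ) < a / b := by positivity
  have h := strictConcaveOn_sin_Icc.2 (x := 0) (y := b)
    ⟨le_rfl, Real.pi_pos.le⟩ ⟨hbpos.le, hb⟩ hbpos.ne ht hu (by ring)
  rw [hcomb, Real.sin_zero, hsa, hsb] at h
  rw [smul_zero, zero_add, smul_eq_mul] at h
  have : a / b * (lam * b) = lam * a := by field_simp
  linarith

theorem sin_eq_mul_self_three_solutions (lam : ℝ) (h0 : 0 < lam) (h1 : lam < 1) :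
    ∃ x₀ ∈ Set.Ioo 0 Real.pi,
      {x ∈ Set.Icc (-Real.pi) Real.pi | Real.sin x = lam * x} = {-x₀, 0, x₀} := by
  -- choose small ε with sin ε > lam * ε
  set ε : ℝ := min 1 (Real.sqrt (2 * (1 - lam))) with hε
  have hεpos : 0 < ε := lt_min one_pos (Real.sqrt_pos.2 (by linarith))
  have hε1 : ε ≤ 1 := min_le_left _ _
  have hεsq : ε ^ 2 ≤ 2 * (1 - lam) := by
    have := min_le_right 1 (Real.sqrt (2 * (1 - lam)))
    calc ε ^ 2 ≤ (Real.sqrt (2 * (1 - lam))) ^ 2 := by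
          apply pow_le_pow_left₀ hεpos.le this
      _ = 2 * (1 - lam) := Real.sq_sqrt (by linarith)
  have hεgt : lam * ε < Real.sin ε := by
    have h := Real.sin_gt_sub_cube hεpos
    nlinarith [sq_nonneg ε, hεpos]
  have hεpi : ε < Real.pi := lt_of_le_of_lt hε1 (by linarith [Real.pi_gt_three])
  -- IVT on [ε, π] for g x = sin x - lam * x
  have hcont : ContinuousOn (fun x => Real.sin x - lam * x) (Icc ε Real.pi) := by
    fun_prop
  have hgε : 0 < Real.sin ε - lam * ε := by linarith
  have hgπ : Real.sin Real.pi - lam * Real.pi < 0 := by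
    rw [Real.sin_pi]; nlinarith [Real.pi_pos]
  obtain ⟨x₀, hx₀mem, hx₀⟩ := intermediate_value_Icc' hεpi.le hcont
    (Set.mem_Icc.2 ⟨hgπ.le, hgε.le⟩)
  have hx₀eq : Real.sin x₀ = lam * x₀ := by
    have : Real.sin x₀ - lam * x₀ = 0 := hx₀
    linarith
  have hx₀pos : 0 < x₀ := lt_of_lt_of_le hεpos hx₀mem.1
  have hx₀pi : x₀ < Real.pi := by
    rcases lt_or_eq_of_le hx₀mem.2 with h | h
    · exact h
    · exfalso; rw [h, Real.sin_pi] at hx₀eq; nlinarith [Real.pi_pos]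
  refine ⟨x₀, ⟨hx₀pos, hx₀pi⟩, ?_⟩
  ext x
  simp only [Set.mem_setOf_eq, Set.mem_insert_iff, Set.mem_singleton_iff, Set.mem_Icc]
  constructor
  · rintro ⟨⟨hxl, hxr⟩, hx⟩
    rcases lt_trichotomy x 0 with hneg | hzero | hpos
    · left
      have hnx : Real.sin (-x) = lam * (-x) := by
        rw [Real.sin_neg, hx]; ring
      have h1 : 0 < -x := by linarith
      have h2 : -x ≤ Real.pi := by linarith
      rcases lt_trichotomy (-x) x₀ with h | h | h
      · exact absurd (sin_uniq lam h0 h1 h hx₀pi.le hnx hx₀eq) id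
      · linarith
      · exact absurd (sin_uniq lam h0 hx₀pos h h2 hx₀eq hnx) id
    · right; left; exact hzero
    · right; right
      rcases lt_trichotomy x x₀ with h | h | h
      · exact absurd (sin_uniq lam h0 hpos h hx₀pi.le hx hx₀eq) id
      · exact h
      · exact absurd (sin_uniq lam h0 hx₀pos h hxr hx₀eq hx) id
  · rintro (rfl | rfl | rfl)
    · refine ⟨⟨by linarith, by linarith⟩, ?_⟩
      rw [Real.sin_neg, hx₀eq]; ring
    · exact ⟨⟨by linarith [Real.pi_pos], Real.pi_pos.le⟩, by simp⟩
    · exact ⟨⟨by linarith [Real.pi_pos], hx₀pi.le⟩, hx₀eq⟩
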